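/- Let f : ℝⁿ → ℝ be differentiable and L-smooth with L > 0, with global minimizer x*, and set ξ(x) := f(x) − f(x*). Let φ : ℝ → ℝ be nondecreasing with φ(ε) > 0, and assume the gradient-domination property ξ(x) ≤ φ(‖∇f(x)‖²) for all x ∈ ℝⁿ. Let x^{t+1} = x^t − (1/L)∇f(x^t) starting from x⁰ with ξ(x⁰) > 0. If 0 < ε ≤ 2L·ξ(x⁰) and k is a natural number with k ≥ (2L·ξ(x⁰)/ε)·log(ξ(x⁰)/φ(ε)), then min { ξ(xᵗ) : t = 0, 1, …, k } ≤ φ(ε). -/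

import Mathlib

open scoped RealInnerProductSpace BigOperators

theorem gradient_dominated_rate {n : ℕ} (f : EuclideanSpace ℝ (Fin n) → ℝ) (L : ℝ) (hL : 0 < L)
    (hdiff : Differentiable ℝ f)
    (hsmooth : ∀ x h : EuclideanSpace ℝ (Fin n),
      f (x + h) ≤ f x + ⟪gradient f x, h⟫ + L / 2 * ‖h‖ ^ 2)
    (xstar : EuclideanSpace ℝ (Fin n)) (hmin : ∀ y, f xstar ≤ f y)
    (φ : ℝ → ℝ) (hφmono : Monotone φ)
    (hdom : ∀ x : EuclideanSpace ℝ (Fin n), f x - f xstar ≤ φ (‖gradient f x‖ ^ 2))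
    (x : ℕ → EuclideanSpace ℝ (Fin n))
    (hiter : ∀ t : ℕ, x (t + 1) = x t - (1 / L) • gradient f (x t))
    (hξ0 : 0 < f (x 0) - f xstar)
    (ε : ℝ) (hε : 0 < ε) (hφε : 0 < φ ε)
    (hεle : ε ≤ 2 * L * (f (x 0) - f xstar))
    (k : ℕ)
    (hk : 2 * L * (f (x 0) - f xstar) / ε * Real.log ((f (x 0) - f xstar) / φ ε) ≤ (k : ℝ)) :
    ∃ t ≤ k, f (x t) - f xstar ≤ φ ε := by
  by_contra hcon
  push_neg at hcon
  set ξ0 := f (x 0) - f xstar with hξ0def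
  -- descent lemma
  have hdesc : ∀ t, f (x (t+1)) ≤ f (x t) - 1/(2*L) * ‖gradient f (x t)‖^2 := by
    intro t
    have hs := hsmooth (x t) (-((1/L) • gradient f (x t)))
    have h1 : x t + -((1/L) • gradient f (x t)) = x t - (1/L) • gradient f (x t) := by
      abel
    rw [h1, ← hiter t] at hs
    have h2 : ⟪gradient f (x t), -((1/L) • gradient f (x t))⟫
        = -(1/L) * ‖gradient f (x t)‖^2 := by
      rw [inner_neg_right, inner_smul_right, real_inner_self_eq_norm_sq]
      ring
    have h3 : ‖-((1/L) • gradient f (x t))‖^2 = (1/L)^2 * ‖gradient f (x t)‖^2 := by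
      rw [norm_neg, norm_smul, mul_pow]
      congr 1
      rw [Real.norm_eq_abs, sq_abs]
    rw [h2, h3] at hs
    have hLne : L ≠ 0 := ne_of_gt hL
    calc f (x (t+1)) ≤ f (x t) + -(1/L) * ‖gradient f (x t)‖^2
          + L/2 * ((1/L)^2 * ‖gradient f (x t)‖^2) := hs
      _ = f (x t) - 1/(2*L) * ‖gradient f (x t)‖^2 := by field_simp; ring
  -- gradient lower bound under the contradiction hypothesis
  have hgrad : ∀ t ≤ k, ε ≤ ‖gradient f (x t)‖^2 := by
    intro t ht
    by_contra hg
    push_neg at hg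
    have := (hdom (x t)).trans (hφmono hg.le)
    exact absurd this (not_le.mpr (hcon t ht))
  -- inductive decrease
  have key : ∀ t ≤ k, f (x t) - f xstar ≤ ξ0 - t * (ε/(2*L)) := by
    intro t
    induction t with
    | zero => intro _; simp [hξ0def]
    | succ m ih =>
      intro h
      have hm : m ≤ k := Nat.le_of_succ_le h
      have h1 := hdesc m
      have h2 := hgrad m hm
      have h3 := ih hm
      have hpos : 0 < 1/(2*L) := by positivity
      have h4 : ε/(2*L) ≤ 1/(2*L) * ‖gradient f (x m)‖^2 := by
        rw [div_eq_mul_one_div ε, mul_comm ε]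
        exact mul_le_mul_of_nonneg_left h2 hpos.le
      push_cast
      nlinarith
  -- conclude
  have hlogb : (ξ0 - φ ε)/ξ0 ≤ Real.log (ξ0 / φ ε) := by
    have h1 := Real.log_le_sub_one_of_pos (div_pos hφε hξ0)
    have h2 : Real.log (φ ε / ξ0) = - Real.log (ξ0 / φ ε) := by
      rw [← Real.log_inv]
      congr 1
      field_simp
    rw [h2] at h1
    have : φ ε / ξ0 - 1 = -((ξ0 - φ ε)/ξ0) := by field_simp; ring
    linarith [this ▸ h1]
  have hkge : 2 * L * (ξ0 - φ ε) / ε ≤ (k : ℝ) := by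
    have h1 : 2 * L * (ξ0 - φ ε) / ε ≤ 2 * L * ξ0 / ε * ((ξ0 - φ ε)/ξ0) := by
      rw [div_mul_div_comm]
      rw [div_le_div_iff₀ hε (by positivity)]
      ring_nf
      nlinarith
    have h2 : 2 * L * ξ0 / ε * ((ξ0 - φ ε)/ξ0) ≤ 2 * L * ξ0 / ε * Real.log (ξ0 / φ ε) :=
      mul_le_mul_of_nonneg_left hlogb (by positivity)
    linarith
  have hfin := key k le_rfl
  have hconk := hcon k le_rfl
  have : (k:ℝ) * (ε/(2*L)) ≥ ξ0 - φ ε := by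
    have := mul_le_mul_of_nonneg_right hkge (le_of_lt (show (0:ℝ) < ε/(2*L) by positivity))
    calc ξ0 - φ ε = 2 * L * (ξ0 - φ ε) / ε * (ε/(2*L)) := by field_simp
      _ ≤ (k:ℝ) * (ε/(2*L)) := this
  linarith
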